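/- Let β₂ > 0 and a ≥ 0, α₂ > 0. The cubic equation t³ − β₂t² − α₂a² = 0 has a unique positive real root t, and with this root, the matrix V = (1/t)·W, for any matrix W with ‖W‖_F = a, satisfies (α₂‖V‖_F² + β₂)·V = W (when a > 0). -/
import Mathlib


open Matrix

/-- Squared Frobenius norm. -/
noncomputable def fsq {ι κ : Type*} [Fintype ι] [Fintype κ] (A : Matrix ι κ ℝ) : ℝ :=
  ∑ i, ∑ j, (A i j) ^ 2

/-- Frobenius norm. -/
noncomputable def fnorm {ι κ : Type*} [Fintype ι] [Fintype κ] (A : Matrix ι κ ℝ) : ℝ :=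
  Real.sqrt (fsq A)

theorem stmt_15 {r n : ℕ} (α₂ β₂ a : ℝ) (hα₂ : 0 < α₂) (hβ₂ : 0 < β₂) (ha : 0 ≤ a) :
    ∃ t : ℝ, 0 < t ∧ t ^ 3 - β₂ * t ^ 2 - α₂ * a ^ 2 = 0 ∧
      (∀ s : ℝ, 0 < s → s ^ 3 - β₂ * s ^ 2 - α₂ * a ^ 2 = 0 → s = t) ∧
      (0 < a → ∀ W : Matrix (Fin r) (Fin n) ℝ, fnorm W = a →
        (α₂ * fsq (t⁻¹ • W) + β₂) • (t⁻¹ • W) = W) := by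
  have hc0 : 0 ≤ α₂ * a ^ 2 := by positivity
  obtain ⟨M, hM⟩ : ∃ M : ℝ, M = β₂ + α₂ * a ^ 2 / β₂ ^ 2 + 1 := ⟨_, rfl⟩
  have hβM : β₂ ≤ M := by
    have : 0 ≤ α₂ * a ^ 2 / β₂ ^ 2 := by positivity
    linarith
  have h4 : β₂ ^ 2 * (α₂ * a ^ 2 / β₂ ^ 2 + 1) = α₂ * a ^ 2 + β₂ ^ 2 := by
    field_simp
  have hfM : 0 ≤ M ^ 3 - β₂ * M ^ 2 - α₂ * a ^ 2 := by
    have h1 : M - β₂ = α₂ * a ^ 2 / β₂ ^ 2 + 1 := by rw [hM]; ring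
    have h2 : β₂ ^ 2 ≤ M ^ 2 := by nlinarith
    have h3 : β₂ ^ 2 * (M - β₂) ≤ M ^ 2 * (M - β₂) := by nlinarith
    have h5 : β₂ ^ 2 * (M - β₂) = α₂ * a ^ 2 + β₂ ^ 2 := by rw [h1]; exact h4
    nlinarith [sq_nonneg β₂]
  have hcont : ContinuousOn (fun x : ℝ => x ^ 3 - β₂ * x ^ 2 - α₂ * a ^ 2)
      (Set.Icc β₂ M) := by fun_prop
  have hivt := intermediate_value_Icc hβM hcont
  have hmem : (0 : ℝ) ∈ Set.Icc (β₂ ^ 3 - β₂ * β₂ ^ 2 - α₂ * a ^ 2)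
      (M ^ 3 - β₂ * M ^ 2 - α₂ * a ^ 2) := ⟨by nlinarith, hfM⟩
  obtain ⟨t, ht_mem, ht_eq⟩ := hivt hmem
  simp only at ht_eq
  have htβ : β₂ ≤ t := ht_mem.1
  have ht0 : 0 < t := lt_of_lt_of_le hβ₂ htβ
  refine ⟨t, ht0, ht_eq, ?_, ?_⟩
  · intro s hs hseq
    have hsβ : β₂ ≤ s := by nlinarith [mul_pos hs hs]
    have key : (s - t) * (s ^ 2 + s * t + t ^ 2 - β₂ * (s + t)) = 0 := by
      linear_combination hseq - ht_eq
    have hpos : 0 < s ^ 2 + s * t + t ^ 2 - β₂ * (s + t) := by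
      nlinarith [mul_pos hs ht0, mul_nonneg hs.le (sub_nonneg.2 hsβ),
        mul_nonneg ht0.le (sub_nonneg.2 htβ)]
    rcases mul_eq_zero.mp key with h | h
    · linarith
    · linarith
  · intro ha0 W hW
    have hfsq0 : 0 ≤ fsq W := by unfold fsq; positivity
    have hfsqW : fsq W = a ^ 2 := by
      have := Real.sq_sqrt hfsq0
      unfold fnorm at hW
      nlinarith
    have hfsq_smul : fsq (t⁻¹ • W) = t⁻¹ ^ 2 * fsq W := by
      unfold fsq
      simp [Matrix.smul_apply, mul_pow, Finset.mul_sum]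
    have hcoef : α₂ * fsq (t⁻¹ • W) + β₂ = t := by
      rw [hfsq_smul, hfsqW]
      have ht2 : t ^ 2 ≠ 0 := by positivity
      field_simp
      nlinarith [ht_eq]
    rw [hcoef, smul_smul, mul_inv_cancel₀ (ne_of_gt ht0), one_smul]
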